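/- arXiv:1912.13325 — 3 statements merged into one kernel-verified Lean document; each statement's English description precedes it below -/
import Mathlib

section
/- Assume (r1,r2,r3,r4,i,j,N) is admissible and i + j ≥ r1 + r3 and i + j ≥ r2 + r4 (so m_min = 0). Then F_1^N(r1,r2,i; r3,r4,j) = (−1)^ρ · K_1 · Σ_{n=0}^{m_max} qⁿ · (q^{a1};q)_n (q^{a2};q)_n (q^{a3};q)_n (q^{a4};q)_n / ( (q;q)_n · (q^{b1};q)_n (q^{b2};q)_n (q^{b3};q)_n ), where a1 = (i − r1 − r2)/2, a2 = (i − r3 − r4)/2, a3 = (j − r1 − r4)/2, a4 = (j − r2 − r3)/2, b1 = −ρ − (N−1), b2 = (i + j − r2 − r4)/2 + 1, b3 = (i + j − r1 − r3)/2 + (N−1) (all integers, and a1 + a2 + a3 + a4 + 1 = b1 + b2 + b3). All Pochhammer factors in the denominators are nonzero for 0 ≤ n ≤ m_max. This is the terminating balanced ₄Φ₃ representation of the type I multiplicity-free 6-j symbol (Statement 3 of the paper, made precise up to the overall sign (−1)^ρ which the paper leaves implicit). -/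
open Finset

/-- The quantum integer `[n] = (tⁿ − t⁻ⁿ)/(t − t⁻¹)`. -/
noncomputable def qint (t : ℝ) (n : ℤ) : ℝ := (t ^ n - t ^ (-n)) / (t - t⁻¹)

/-- The quantum factorial `[n]! = [1][2]⋯[n]`, with `[0]! = 1`
(and value `1` for negative arguments, which never occur below). -/
noncomputable def qfact (t : ℝ) (n : ℤ) : ℝ :=
  ∏ k ∈ Finset.range n.toNat, qint t ((k : ℤ) + 1)

/-- The q-Pochhammer symbol `(x; q)_n = ∏_{s=0}^{n−1} (1 − x qˢ)`. -/
noncomputable def qpoch (x q : ℝ) (n : ℕ) : ℝ :=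
  ∏ s ∈ Finset.range n, (1 - x * q ^ s)

/-- Admissibility of the tuple `(r₁,r₂,r₃,r₄,i,j,N)`. -/
def Admissible (r₁ r₂ r₃ r₄ i j N : ℤ) : Prop :=
  0 ≤ r₁ ∧ 0 ≤ r₂ ∧ 0 ≤ r₃ ∧ 0 ≤ r₄ ∧ 0 ≤ i ∧ 0 ≤ j ∧ 2 ≤ N ∧
  2 ∣ (r₁ + r₂ + i) ∧ 2 ∣ (r₃ + r₄ + i) ∧ 2 ∣ (r₁ + r₄ + j) ∧ 2 ∣ (r₂ + r₃ + j) ∧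
  max |r₁ - r₂| |r₃ - r₄| ≤ i ∧ i ≤ min (r₁ + r₂) (r₃ + r₄) ∧
  max |r₂ - r₃| |r₁ - r₄| ≤ j ∧ j ≤ min (r₂ + r₃) (r₁ + r₄)

/-- `ρ = (r₁+r₂+r₃+r₄)/2`. -/
def rho (r₁ r₂ r₃ r₄ : ℤ) : ℤ := (r₁ + r₂ + r₃ + r₄) / 2

/-- `m_max = (1/2)·min(r₁+r₂−i, r₃+r₄−i, r₁+r₄−j, r₂+r₃−j)`. -/
def mMax (r₁ r₂ r₃ r₄ i j : ℤ) : ℤ :=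
  (min (min (r₁ + r₂ - i) (r₃ + r₄ - i)) (min (r₁ + r₄ - j) (r₂ + r₃ - j))) / 2

/-- `m_min = (1/2)·max(0, r₁+r₃−i−j, r₂+r₄−i−j)`. -/
def mMin (r₁ r₂ r₃ r₄ i j : ℤ) : ℤ :=
  (max 0 (max (r₁ + r₃ - i - j) (r₂ + r₄ - i - j))) / 2

/-- `θ_N(a,b,c)`. -/
noncomputable def theta (t : ℝ) (N a b c : ℤ) : ℝ :=
  Real.sqrt (qfact t ((a + b - c) / 2) * qfact t ((a - b + c) / 2) *
    qfact t ((-a + b + c) / 2) / qfact t ((a + b + c) / 2 + N - 1))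

/-- `K′ = θ_N(r₁,r₂,i)·θ_N(r₃,r₄,i)·θ_N(r₁,r₄,j)·θ_N(r₂,r₃,j)·[N−1]!·[N−2]!`. -/
noncomputable def Kprime (t : ℝ) (N r₁ r₂ r₃ r₄ i j : ℤ) : ℝ :=
  theta t N r₁ r₂ i * theta t N r₃ r₄ i * theta t N r₁ r₄ j * theta t N r₂ r₃ j *
    qfact t (N - 1) * qfact t (N - 2)

/-- The multiplicity-free 6-j expression `F_T^N(r₁,r₂,i; r₃,r₄,j)` of type `T ∈ {1,2}`. -/
noncomputable def F (t : ℝ) (T : ℕ) (N r₁ r₂ i r₃ r₄ j : ℤ) : ℝ :=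
  Kprime t N r₁ r₂ r₃ r₄ i j *
    ∑ m ∈ Finset.Icc (mMin r₁ r₂ r₃ r₄ i j) (mMax r₁ r₂ r₃ r₄ i j),
      (-1 : ℝ) ^ (rho r₁ r₂ r₃ r₄ - m) * qfact t (rho r₁ r₂ r₃ r₄ + N - 1 - m) /
        (qfact t m * qfact t ((r₃ + r₄ - i) / 2 - m) * qfact t ((r₂ + r₃ - j) / 2 - m) *
          qfact t ((r₁ + r₄ - j) / 2 - m) * qfact t ((i + j - r₂ - r₄) / 2 + m) *
          qfact t ((r₁ + r₂ - i) / 2 + (N - 2) * (if T = 2 then 1 else 0) - m) *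
          qfact t ((i + j - r₁ - r₃) / 2 + (N - 2) * (if T = 1 then 1 else 0) + m))

/-- The prefactor `K_T` (for the case `m_min = 0`). -/
noncomputable def Kfac (t : ℝ) (T : ℕ) (N r₁ r₂ i r₃ r₄ j : ℤ) : ℝ :=
  Kprime t N r₁ r₂ r₃ r₄ i j * qfact t (rho r₁ r₂ r₃ r₄ + N - 1) /
    (qfact t ((r₃ + r₄ - i) / 2) *
      qfact t ((r₁ + r₂ - i) / 2 + (N - 2) * (if T = 2 then 1 else 0)) *
      qfact t ((r₂ + r₃ - j) / 2) * qfact t ((r₁ + r₄ - j) / 2) *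
      qfact t ((i + j - r₂ - r₄) / 2) *
      qfact t ((i + j - r₁ - r₃) / 2 + (N - 2) * (if T = 1 then 1 else 0)))


section Helpers
variable {t : ℝ}

private lemma q_ne_one (ht : 0 < t) (ht1 : t ≠ 1) : t ^ 2 ≠ 1 := by
  intro h
  rw [sq] at h
  rcases mul_self_eq_one_iff.mp h with h' | h'
  · exact ht1 h'
  · nlinarith

private lemma qsq (ht : 0 < t) (n : ℤ) : (t^2)^n = t^n * t^n := by
  rw [← zpow_natCast t 2, ← zpow_mul]
  push_cast
  rw [two_mul, zpow_add₀ ht.ne']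

private lemma tsub_ne (ht : 0 < t) (ht1 : t ≠ 1) : t - t⁻¹ ≠ 0 := by
  intro h
  apply q_ne_one ht ht1
  have h1 : t = t⁻¹ := by linarith
  have h2 : t * t = 1 := by
    nth_rewrite 2 [h1]
    exact mul_inv_cancel₀ ht.ne'
  rw [sq]; exact h2

private lemma qint_eq (ht : 0 < t) (ht1 : t ≠ 1) (n : ℤ) :
    qint t n = t ^ (1 - n) * ((t^2) ^ n - 1) / (t^2 - 1) := by
  have ht0 : t ≠ 0 := ht.ne'
  have ha : t ^ n ≠ 0 := zpow_ne_zero n ht0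
  have hq1 : t^2 - 1 ≠ 0 := sub_ne_zero.mpr (q_ne_one ht ht1)
  rw [qint, qsq ht, zpow_sub₀ ht0, zpow_one, zpow_neg,
    div_eq_div_iff (tsub_ne ht ht1) hq1]
  field_simp

private lemma qint_eq' (ht : 0 < t) (ht1 : t ≠ 1) (n : ℤ) :
    qint t n = t ^ (1 + n) * (1 - (t^2) ^ (-n)) / (t^2 - 1) := by
  have ht0 : t ≠ 0 := ht.ne'
  have ha : t ^ n ≠ 0 := zpow_ne_zero n ht0
  have hq1 : t^2 - 1 ≠ 0 := sub_ne_zero.mpr (q_ne_one ht ht1)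
  rw [qint, qsq ht, zpow_add₀ ht0, zpow_one, zpow_neg,
    div_eq_div_iff (tsub_ne ht ht1) hq1]
  field_simp

private lemma qint_pos (ht : 0 < t) (ht1 : t ≠ 1) (n : ℤ) (hn : 1 ≤ n) : 0 < qint t n := by
  rw [qint_eq ht ht1, mul_div_assoc]
  have hq0 : (0:ℝ) < t^2 := by positivity
  have hnn : ((t:ℝ)^2)^n = (t^2)^(n.toNat) := by
    rw [← zpow_natCast (t^2), Int.toNat_of_nonneg (by omega)]
  refine mul_pos (zpow_pos ht _) ?_
  rcases (q_ne_one ht ht1).lt_or_gt with hq | hq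
  · apply div_pos_iff.mpr; right
    constructor
    · rw [hnn]; simp only [sub_neg]; exact pow_lt_one₀ hq0.le hq (by omega)
    · linarith
  · apply div_pos_iff.mpr; left
    constructor
    · rw [hnn]; simp only [sub_pos]; exact one_lt_pow₀ hq (by omega)
    · linarith

private lemma qfact_pos (ht : 0 < t) (ht1 : t ≠ 1) (n : ℤ) : 0 < qfact t n := by
  rw [qfact]
  exact Finset.prod_pos fun k _ => qint_pos ht ht1 _ (by omega)

private lemma qfact_succ (n : ℤ) (hn : 0 ≤ n) : qfact t (n + 1) = qfact t n * qint t (n + 1) := by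
  rw [qfact, qfact, show (n+1).toNat = n.toNat + 1 by omega, Finset.prod_range_succ]
  congr 2
  omega

private lemma qfact_asc (X : ℤ) (hX : 0 ≤ X) (m : ℕ) :
    qfact t (X + m) = qfact t X * ∏ k ∈ range m, qint t (X + 1 + k) := by
  induction m with
  | zero => simp
  | succ m ih =>
    rw [Finset.prod_range_succ, ← mul_assoc, ← ih,
        show (X + ((m:ℕ)+1:ℕ) : ℤ) = (X + m) + 1 by push_cast; ring,
        qfact_succ _ (by positivity)]
    congr 2
    push_cast; ring

private lemma qfact_desc (X : ℤ) (m : ℕ) (h : (m:ℤ) ≤ X) :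
    qfact t X = qfact t (X - m) * ∏ k ∈ range m, qint t (X - k) := by
  induction m with
  | zero => simp
  | succ m ih =>
    rw [ih (by push_cast at h ⊢; omega), Finset.prod_range_succ]
    have h1 : qfact t (X - m) = qfact t (X - ((m:ℕ)+1:ℕ)) * qint t (X - m) := by
      have h2 := qfact_succ (t := t) (X - ((m:ℕ)+1:ℕ)) (by push_cast at h; omega)
      rw [show X - ((m:ℕ)+1:ℕ) + 1 = X - m by push_cast; ring] at h2
      exact h2
    rw [h1]; ring

private lemma qzpow_ne_one (ht : 0 < t) (ht1 : t ≠ 1) (z : ℤ) (hz : z ≠ 0) :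
    (t^2) ^ z ≠ 1 := by
  have hq0 : (0:ℝ) < t^2 := by positivity
  have hnat : ∀ m : ℕ, m ≠ 0 → (t^2) ^ m ≠ (1:ℝ) := by
    intro m hm
    rcases (q_ne_one ht ht1).lt_or_gt with hq | hq
    · exact ne_of_lt (pow_lt_one₀ hq0.le hq hm)
    · exact ne_of_gt (one_lt_pow₀ hq hm)
  rcases hz.lt_or_gt with hneg | hpos
  · rw [show z = -(-z) by ring, zpow_neg,
      show -z = (((-z).toNat : ℕ) : ℤ) by omega, zpow_natCast]
    simp only [ne_eq, inv_eq_one]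
    exact hnat _ (by omega)
  · rw [show z = (((z).toNat : ℕ) : ℤ) by omega, zpow_natCast]
    exact hnat _ (by omega)

private lemma qpoch_ne_zero (ht : 0 < t) (ht1 : t ≠ 1) (e : ℤ) (n : ℕ)
    (he : ∀ s : ℕ, s < n → e + s ≠ 0) :
    qpoch ((t^2)^e) (t^2) n ≠ 0 := by
  rw [qpoch]
  refine Finset.prod_ne_zero_iff.mpr fun s hs => ?_
  have h1 : ((t:ℝ)^2)^e * (t^2)^s = (t^2)^(e + s) := by
    rw [← zpow_natCast (t^2) s, ← zpow_add₀ (by positivity : ((t:ℝ)^2) ≠ 0)]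
  rw [h1]
  have h2 := qzpow_ne_one ht ht1 (e + s) (he s (Finset.mem_range.mp hs))
  intro h; exact h2 (by linarith)

private lemma qpoch_q_ne_zero (ht : 0 < t) (ht1 : t ≠ 1) (n : ℕ) :
    qpoch (t^2) (t^2) n ≠ 0 := by
  have h := qpoch_ne_zero ht ht1 1 n (fun s _ => by omega)
  rwa [zpow_one] at h

private lemma prod_desc (ht : 0 < t) (ht1 : t ≠ 1) (X : ℤ) (m : ℕ) :
    ∏ k ∈ range m, qint t (X - k) =
      (∏ k ∈ range m, t ^ (1 + X - k)) * qpoch ((t^2)^(-X)) (t^2) m / (t^2 - 1)^m := by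
  have ht0 : t ≠ 0 := ht.ne'
  have hq0 : ((t:ℝ)^2) ≠ 0 := by positivity
  have h : ∀ k ∈ range m, qint t (X - k) =
      t ^ (1 + X - k) * (1 - (t^2)^(-X) * (t^2)^k) * (t^2 - 1)⁻¹ := by
    intro k _
    rw [qint_eq' ht ht1, div_eq_mul_inv]
    congr 2
    · congr 1; ring
    · congr 1
      rw [← zpow_natCast (t^2) k, ← zpow_add₀ hq0]
      congr 1; ring
  rw [Finset.prod_congr rfl h, Finset.prod_mul_distrib, Finset.prod_mul_distrib,
    Finset.prod_const, qpoch, div_eq_mul_inv, ← inv_pow, Finset.card_range]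

private lemma prod_asc (ht : 0 < t) (ht1 : t ≠ 1) (X : ℤ) (m : ℕ) :
    ∏ k ∈ range m, qint t (X + 1 + k) =
      (-1)^m * (∏ k ∈ range m, t ^ (-(X + k))) * qpoch ((t^2)^(X+1)) (t^2) m / (t^2 - 1)^m := by
  have ht0 : t ≠ 0 := ht.ne'
  have hq0 : ((t:ℝ)^2) ≠ 0 := by positivity
  have h : ∀ k ∈ range m, qint t (X + 1 + k) =
      (-1) * t ^ (-(X + k)) * (1 - (t^2)^(X+1) * (t^2)^k) * (t^2 - 1)⁻¹ := by
    intro k _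
    rw [qint_eq' ht ht1, div_eq_mul_inv]
    have hw : t ^ (X+1+(k:ℤ)) ≠ 0 := zpow_ne_zero _ ht0
    have e2 : ((t:ℝ)^2)^(X+1) * (t^2)^(k:ℕ) = t ^ (X+1+(k:ℤ)) * t ^ (X+1+(k:ℤ)) := by
      rw [← zpow_natCast (t^2) k, ← zpow_add₀ hq0, qsq ht]
    have e4 : ((t:ℝ)^2)^(-(X + 1 + (k:ℤ))) = (t ^ (X+1+(k:ℤ)) * t ^ (X+1+(k:ℤ)))⁻¹ := by
      rw [qsq ht, zpow_neg, mul_inv]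
    have e3 : t ^ ((1:ℤ) + (X + 1 + k)) =
        t ^ (-(X + (k:ℤ))) * (t ^ (X+1+(k:ℤ)) * t ^ (X+1+(k:ℤ))) := by
      rw [← zpow_add₀ ht0, ← zpow_add₀ ht0]
      congr 1; ring
    have hq1 : t^2 - 1 ≠ 0 := sub_ne_zero.mpr (q_ne_one ht ht1)
    rw [e2, e4, e3]
    generalize t ^ (X+1+(k:ℤ)) = w at hw ⊢
    field_simp
    ring
  rw [Finset.prod_congr rfl h, Finset.prod_mul_distrib, Finset.prod_mul_distrib,
    Finset.prod_mul_distrib, Finset.prod_const, Finset.prod_const, qpoch,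
    div_eq_mul_inv, ← inv_pow, Finset.card_range]

private lemma Tprod (ht : 0 < t) (A B C E D G P : ℤ)
    (hsum : A + B + C + E + D + G + 1 = P) (m : ℕ) :
    (∏ k ∈ range m, t ^ (1 + A - k)) * (∏ k ∈ range m, t ^ (1 + B - k)) *
      (∏ k ∈ range m, t ^ (1 + C - k)) * (∏ k ∈ range m, t ^ (1 + E - k)) =
    (∏ k ∈ range m, t ^ (1 + P - k)) * (t^2)^m * (∏ k ∈ range m, t ^ (-(D + (k:ℤ)))) *
      (∏ k ∈ range m, t ^ (-(G + (k:ℤ)))) * (∏ k ∈ range m, t ^ (-((0:ℤ) + (k:ℤ)))) := by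
  have ht0 : t ≠ 0 := ht.ne'
  have h2 : ((t:ℝ)^2)^m = ∏ _k ∈ range m, t ^ ((2:ℤ)) := by
    rw [Finset.prod_const, Finset.card_range,
      show ((2:ℤ)) = ((2:ℕ):ℤ) by norm_num, zpow_natCast]
  rw [h2, ← Finset.prod_mul_distrib, ← Finset.prod_mul_distrib, ← Finset.prod_mul_distrib,
    ← Finset.prod_mul_distrib, ← Finset.prod_mul_distrib, ← Finset.prod_mul_distrib,
    ← Finset.prod_mul_distrib]
  refine Finset.prod_congr rfl fun k _ => ?_
  simp only [← zpow_add₀ ht0]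
  congr 1
  omega

private lemma hs_sign (m : ℕ) : ((-1:ℝ))^m * ((-1:ℝ))^m = 1 := by
  rw [← mul_pow]; norm_num

set_option maxHeartbeats 1000000 in
private lemma core_prods (ht : 0 < t) (ht1 : t ≠ 1) (A B C E D G P : ℤ) (m : ℕ)
    (hsum : A + B + C + E + D + G + 1 = P) :
    (-1:ℝ)^m * ((∏ k ∈ range m, qint t (A - k)) * (∏ k ∈ range m, qint t (B - k)) *
        (∏ k ∈ range m, qint t (C - k)) * (∏ k ∈ range m, qint t (E - k))) *
      (qpoch (t^2) (t^2) m * qpoch ((t^2)^(-P)) (t^2) m *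
        qpoch ((t^2)^(D+1)) (t^2) m * qpoch ((t^2)^(G+1)) (t^2) m) =
    ((∏ k ∈ range m, qint t (P - k)) * (∏ k ∈ range m, qint t (D + 1 + k)) *
        (∏ k ∈ range m, qint t (G + 1 + k)) * (∏ k ∈ range m, qint t (0 + 1 + k))) *
      ((t^2)^m * (qpoch ((t^2)^(-E)) (t^2) m * qpoch ((t^2)^(-A)) (t^2) m *
        qpoch ((t^2)^(-C)) (t^2) m * qpoch ((t^2)^(-B)) (t^2) m)) := by
  rw [prod_desc ht ht1 A m, prod_desc ht ht1 B m, prod_desc ht ht1 C m,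
    prod_desc ht ht1 E m, prod_desc ht ht1 P m,
    prod_asc ht ht1 D m, prod_asc ht ht1 G m, prod_asc ht ht1 0 m,
    show ((0:ℤ)+1) = 1 by ring, zpow_one]
  have hT := Tprod ht A B C E D G P hsum m
  have hs := hs_sign m
  linear_combination
    (((-1:ℝ)^m * (qpoch ((t^2)^(-A)) (t^2) m * qpoch ((t^2)^(-B)) (t^2) m *
        qpoch ((t^2)^(-C)) (t^2) m * qpoch ((t^2)^(-E)) (t^2) m *
        qpoch (t^2) (t^2) m * qpoch ((t^2)^(-P)) (t^2) m *
        qpoch ((t^2)^(D+1)) (t^2) m * qpoch ((t^2)^(G+1)) (t^2) m)) /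
      ((t^2-1)^m)^4) * hT
    - (((-1:ℝ)^m * (qpoch ((t^2)^(-A)) (t^2) m * qpoch ((t^2)^(-B)) (t^2) m *
        qpoch ((t^2)^(-C)) (t^2) m * qpoch ((t^2)^(-E)) (t^2) m *
        qpoch (t^2) (t^2) m * qpoch ((t^2)^(-P)) (t^2) m *
        qpoch ((t^2)^(D+1)) (t^2) m * qpoch ((t^2)^(G+1)) (t^2) m) *
        (∏ k ∈ range m, t ^ (1 + P - (k:ℤ))) * (t^2)^m *
        (∏ k ∈ range m, t ^ (-(D + (k:ℤ)))) * (∏ k ∈ range m, t ^ (-(G + (k:ℤ)))) *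
        (∏ k ∈ range m, t ^ (-((0:ℤ) + (k:ℤ))))) /
      ((t^2-1)^m)^4) * hs

set_option maxHeartbeats 2000000 in
private lemma core (ht : 0 < t) (ht1 : t ≠ 1) (A B C E D G P : ℤ) (m : ℕ)
    (hA : (m:ℤ) ≤ A) (hB : (m:ℤ) ≤ B) (hC : (m:ℤ) ≤ C) (hE : (m:ℤ) ≤ E) (hP : (m:ℤ) ≤ P)
    (hD : 0 ≤ D) (hG : 0 ≤ G) (hsum : A + B + C + E + D + G + 1 = P) :
    (-1:ℝ)^m * (qfact t (P - m) /
      (qfact t m * qfact t (A - m) * qfact t (B - m) * qfact t (C - m) *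
        qfact t (D + m) * qfact t (E - m) * qfact t (G + m))) =
    (qfact t P / (qfact t A * qfact t E * qfact t B * qfact t C * qfact t D * qfact t G)) *
      ((t^2)^m * (qpoch ((t^2)^(-E)) (t^2) m * qpoch ((t^2)^(-A)) (t^2) m *
        qpoch ((t^2)^(-C)) (t^2) m * qpoch ((t^2)^(-B)) (t^2) m) /
       (qpoch (t^2) (t^2) m * qpoch ((t^2)^(-P)) (t^2) m *
        qpoch ((t^2)^(D+1)) (t^2) m * qpoch ((t^2)^(G+1)) (t^2) m)) := by
  have ht0 : t ≠ 0 := ht.ne'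
  have eD : qfact t (D + m) = qfact t D * ∏ k ∈ range m, qint t (D + 1 + k) :=
    qfact_asc D hD m
  have eG : qfact t (G + m) = qfact t G * ∏ k ∈ range m, qint t (G + 1 + k) :=
    qfact_asc G hG m
  have em : qfact t (m:ℤ) = ∏ k ∈ range m, qint t (0 + 1 + k) := by
    have h := qfact_asc (t := t) 0 le_rfl m
    rw [zero_add] at h
    rw [h, show qfact t 0 = 1 by simp [qfact], one_mul]
  have pP : qpoch ((t^2)^(-P)) (t^2) m ≠ 0 :=
    qpoch_ne_zero ht ht1 _ m (fun s hs => by omega)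
  have pD : qpoch ((t^2)^(D+1)) (t^2) m ≠ 0 :=
    qpoch_ne_zero ht ht1 _ m (fun s hs => by omega)
  have pG : qpoch ((t^2)^(G+1)) (t^2) m ≠ 0 :=
    qpoch_ne_zero ht ht1 _ m (fun s hs => by omega)
  have p1 : qpoch (t^2) (t^2) m ≠ 0 := qpoch_q_ne_zero ht ht1 m
  have hD1 : qfact t ↑m * qfact t (A - ↑m) * qfact t (B - ↑m) * qfact t (C - ↑m) *
      qfact t (D + ↑m) * qfact t (E - ↑m) * qfact t (G + ↑m) ≠ 0 := by
    have q1 := (qfact_pos ht ht1 (↑m : ℤ)).ne'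
    have q2 := (qfact_pos ht ht1 (A - ↑m)).ne'
    have q3 := (qfact_pos ht ht1 (B - ↑m)).ne'
    have q4 := (qfact_pos ht ht1 (C - ↑m)).ne'
    have q5 := (qfact_pos ht ht1 (D + ↑m)).ne'
    have q6 := (qfact_pos ht ht1 (E - ↑m)).ne'
    have q7 := (qfact_pos ht ht1 (G + ↑m)).ne'
    exact mul_ne_zero (mul_ne_zero (mul_ne_zero (mul_ne_zero (mul_ne_zero
      (mul_ne_zero q1 q2) q3) q4) q5) q6) q7
  have hD2 : (qfact t A * qfact t E * qfact t B * qfact t C * qfact t D * qfact t G) *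
      (qpoch (t^2) (t^2) m * qpoch ((t^2)^(-P)) (t^2) m *
        qpoch ((t^2)^(D+1)) (t^2) m * qpoch ((t^2)^(G+1)) (t^2) m) ≠ 0 := by
    have q1 := (qfact_pos ht ht1 A).ne'
    have q2 := (qfact_pos ht ht1 B).ne'
    have q3 := (qfact_pos ht ht1 C).ne'
    have q4 := (qfact_pos ht ht1 D).ne'
    have q5 := (qfact_pos ht ht1 E).ne'
    have q6 := (qfact_pos ht ht1 G).ne'
    exact mul_ne_zero
      (mul_ne_zero (mul_ne_zero (mul_ne_zero (mul_ne_zero (mul_ne_zero q1 q5) q2) q3) q4) q6)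
      (mul_ne_zero (mul_ne_zero (mul_ne_zero p1 pP) pD) pG)
  rw [mul_div_assoc', div_mul_div_comm, div_eq_div_iff hD1 hD2]
  have hqdA := qfact_desc (t := t) A m hA
  have hqdB := qfact_desc (t := t) B m hB
  have hqdC := qfact_desc (t := t) C m hC
  have hqdE := qfact_desc (t := t) E m hE
  have hqdP := qfact_desc (t := t) P m hP
  rw [hqdA, hqdB, hqdC, hqdE, hqdP, eD, eG, em]
  have hcp := core_prods ht ht1 A B C E D G P m hsum
  linear_combination (qfact t (P - ↑m) * qfact t (A - ↑m) * qfact t (B - ↑m) *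
    qfact t (C - ↑m) * qfact t (E - ↑m) * qfact t D * qfact t G) * hcp

end Helpers

/-- the terminating balanced `₄Φ₃` representation of the type I
multiplicity-free 6-j symbol (with `m_min = 0`), including the balance relation on the
arguments and the nonvanishing of the denominator Pochhammer factors. -/
theorem stmt4 (t : ℝ) (ht : 0 < t) (ht1 : t ≠ 1) (r₁ r₂ r₃ r₄ i j N : ℤ)
    (hadm : Admissible r₁ r₂ r₃ r₄ i j N)
    (hij1 : r₁ + r₃ ≤ i + j) (hij2 : r₂ + r₄ ≤ i + j) :
    (((i - r₁ - r₂) / 2) + ((i - r₃ - r₄) / 2) + ((j - r₁ - r₄) / 2) + ((j - r₂ - r₃) / 2) + 1 =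
      (-(rho r₁ r₂ r₃ r₄) - (N - 1)) + ((i + j - r₂ - r₄) / 2 + 1) +
        ((i + j - r₁ - r₃) / 2 + (N - 1))) ∧
    (∀ n : ℕ, (n : ℤ) ≤ mMax r₁ r₂ r₃ r₄ i j →
      qpoch (t ^ 2) (t ^ 2) n ≠ 0 ∧
      qpoch ((t ^ 2) ^ (-(rho r₁ r₂ r₃ r₄) - (N - 1))) (t ^ 2) n ≠ 0 ∧
      qpoch ((t ^ 2) ^ ((i + j - r₂ - r₄) / 2 + 1)) (t ^ 2) n ≠ 0 ∧
      qpoch ((t ^ 2) ^ ((i + j - r₁ - r₃) / 2 + (N - 1))) (t ^ 2) n ≠ 0) ∧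
    F t 1 N r₁ r₂ i r₃ r₄ j =
      (-1 : ℝ) ^ (rho r₁ r₂ r₃ r₄) * Kfac t 1 N r₁ r₂ i r₃ r₄ j *
        ∑ n ∈ Finset.range ((mMax r₁ r₂ r₃ r₄ i j).toNat + 1),
          (t ^ 2) ^ n *
            (qpoch ((t ^ 2) ^ ((i - r₁ - r₂) / 2)) (t ^ 2) n *
              qpoch ((t ^ 2) ^ ((i - r₃ - r₄) / 2)) (t ^ 2) n *
              qpoch ((t ^ 2) ^ ((j - r₁ - r₄) / 2)) (t ^ 2) n *
              qpoch ((t ^ 2) ^ ((j - r₂ - r₃) / 2)) (t ^ 2) n) /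
            (qpoch (t ^ 2) (t ^ 2) n *
              qpoch ((t ^ 2) ^ (-(rho r₁ r₂ r₃ r₄) - (N - 1))) (t ^ 2) n *
              qpoch ((t ^ 2) ^ ((i + j - r₂ - r₄) / 2 + 1)) (t ^ 2) n *
              qpoch ((t ^ 2) ^ ((i + j - r₁ - r₃) / 2 + (N - 1))) (t ^ 2) n) := by
  obtain ⟨hr1, hr2, hr3, hr4, hi, hj, hN, d12, d34, d14, d23, hi1, hi2, hj1, hj2⟩ := hadm
  have ht0 : t ≠ 0 := ht.ne'
  refine ⟨by simp only [rho]; omega, ?_, ?_⟩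
  · intro n hn
    simp only [mMax] at hn
    refine ⟨qpoch_q_ne_zero ht ht1 n, ?_, ?_, ?_⟩
    · exact qpoch_ne_zero ht ht1 _ n (fun s hs => by simp only [rho]; omega)
    · exact qpoch_ne_zero ht ht1 _ n (fun s hs => by omega)
    · exact qpoch_ne_zero ht ht1 _ n (fun s hs => by omega)
  · have hmin : mMin r₁ r₂ r₃ r₄ i j = 0 := by simp only [mMin]; omega
    have hbij : Finset.Icc (0:ℤ) (mMax r₁ r₂ r₃ r₄ i j) =
        Finset.map ⟨(Nat.cast : ℕ → ℤ), Nat.cast_injective⟩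
          (Finset.range ((mMax r₁ r₂ r₃ r₄ i j).toNat + 1)) := by
      have hM0 : 0 ≤ mMax r₁ r₂ r₃ r₄ i j := by simp only [mMax]; omega
      ext x
      simp only [Finset.mem_Icc, Finset.mem_map, Finset.mem_range,
        Function.Embedding.coeFn_mk]
      constructor
      · rintro ⟨h0, h1⟩
        exact ⟨x.toNat, by omega, by omega⟩
      · rintro ⟨a, ha, rfl⟩
        omega
    rw [F, Kfac]
    simp only [reduceIte, mul_zero, add_zero, mul_one]
    rw [if_neg (show ¬(1:ℕ) = 2 by norm_num)]
    simp only [mul_zero, add_zero]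
    rw [hmin, hbij, Finset.sum_map, Finset.mul_sum, Finset.mul_sum]
    refine Finset.sum_congr rfl fun n hn => ?_
    simp only [Function.Embedding.coeFn_mk]
    have hn2 : (n:ℤ) ≤ (min (min (r₁+r₂-i) (r₃+r₄-i)) (min (r₁+r₄-j) (r₂+r₃-j)))/2 := by
      have h := Finset.mem_range.mp hn
      simp only [mMax] at h
      omega
    have hRval : 2 * rho r₁ r₂ r₃ r₄ = r₁ + r₂ + r₃ + r₄ := by simp only [rho]; omega
    have hcore := core ht ht1 ((r₃+r₄-i)/2) ((r₂+r₃-j)/2) ((r₁+r₄-j)/2) ((r₁+r₂-i)/2)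
      ((i+j-r₂-r₄)/2) ((i+j-r₁-r₃)/2 + (N-2)) (rho r₁ r₂ r₃ r₄ + N - 1) n
      (by omega) (by omega) (by omega) (by omega) (by omega) (by omega) (by omega) (by omega)
    have hsign : (-1:ℝ)^(rho r₁ r₂ r₃ r₄ - (n:ℤ)) =
        (-1:ℝ)^(rho r₁ r₂ r₃ r₄) * (-1:ℝ)^(n:ℕ) := by
      rw [zpow_sub₀ (by norm_num : (-1:ℝ) ≠ 0), zpow_natCast, div_eq_mul_inv]
      congr 1
      rw [← inv_pow, inv_neg, inv_one]
    rw [show (i - r₁ - r₂)/2 = -((r₁+r₂-i)/2) from by omega,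
        show (i - r₃ - r₄)/2 = -((r₃+r₄-i)/2) from by omega,
        show (j - r₁ - r₄)/2 = -((r₁+r₄-j)/2) from by omega,
        show (j - r₂ - r₃)/2 = -((r₂+r₃-j)/2) from by omega,
        show -rho r₁ r₂ r₃ r₄ - (N-1) = -(rho r₁ r₂ r₃ r₄ + N - 1) from by ring,
        show (i+j-r₁-r₃)/2 + (N-1) = (i+j-r₁-r₃)/2 + (N-2) + 1 from by ring]
    linear_combination
      (Kprime t N r₁ r₂ r₃ r₄ i j *
        (qfact t (rho r₁ r₂ r₃ r₄ + N - 1 - ↑n) /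
          (qfact t ↑n * qfact t ((r₃+r₄-i)/2 - ↑n) * qfact t ((r₂+r₃-j)/2 - ↑n) *
            qfact t ((r₁+r₄-j)/2 - ↑n) * qfact t ((i+j-r₂-r₄)/2 + ↑n) *
            qfact t ((r₁+r₂-i)/2 - ↑n) * qfact t ((i+j-r₁-r₃)/2 + (N-2) + ↑n)))) * hsign
      + (Kprime t N r₁ r₂ r₃ r₄ i j * (-1:ℝ)^(rho r₁ r₂ r₃ r₄)) * hcore
end

section
/- (Tetrahedral symmetries, type I.) Assume (r1,r2,r3,r4,i,j,N) is admissible. Then the tuples obtained by the permutations below are admissible and F_1^N(r1, r2, i; r3, r4, j) = F_1^N(r3, r4, i; r1, r2, j) = F_1^N(r1, r4, j; r3, r2, i) = F_1^N(r3, r2, j; r1, r4, i). (No fusion relation is needed; these are the tetrahedral symmetries that preserve the type I form of the multiplicity-free 6-j symbol.) -/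
open Finset

lemma theta_comm (t : ℝ) (N a b c : ℤ) : theta t N b a c = theta t N a b c := by
  unfold theta
  rw [show b + a - c = a + b - c by ring, show b - a + c = -a + b + c by ring,
    show -b + a + c = a - b + c by ring, show b + a + c = a + b + c by ring]
  ring_nf

set_option maxHeartbeats 1000000 in
/-- tetrahedral symmetries, type I: the permuted tuples are admissible and
`F_1^N(r₁,r₂,i;r₃,r₄,j) = F_1^N(r₃,r₄,i;r₁,r₂,j) = F_1^N(r₁,r₄,j;r₃,r₂,i) = F_1^N(r₃,r₂,j;r₁,r₄,i)`. -/
theorem stmt11 (t : ℝ) (ht : 0 < t) (ht1 : t ≠ 1) (r₁ r₂ r₃ r₄ i j N : ℤ)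
    (hadm : Admissible r₁ r₂ r₃ r₄ i j N) :
    Admissible r₃ r₄ r₁ r₂ i j N ∧
    Admissible r₁ r₄ r₃ r₂ j i N ∧
    Admissible r₃ r₂ r₁ r₄ j i N ∧
    F t 1 N r₁ r₂ i r₃ r₄ j = F t 1 N r₃ r₄ i r₁ r₂ j ∧
    F t 1 N r₁ r₂ i r₃ r₄ j = F t 1 N r₁ r₄ j r₃ r₂ i ∧
    F t 1 N r₁ r₂ i r₃ r₄ j = F t 1 N r₃ r₂ j r₁ r₄ i := by
  obtain ⟨h1, h2, h3, h4, h5, h6, h7, h8, h9, h10, h11, h12, h13, h14, h15⟩ := hadm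
  simp only [max_le_iff, le_min_iff, abs_le] at h12 h13 h14 h15
  refine ⟨?_, ?_, ?_, ?_, ?_, ?_⟩
  · refine ⟨h3, h4, h1, h2, h5, h6, h7, ?_, ?_, ?_, ?_, ?_, ?_, ?_, ?_⟩ <;>
      (try simp only [max_le_iff, le_min_iff, abs_le]) <;> omega
  · refine ⟨h1, h4, h3, h2, h6, h5, h7, ?_, ?_, ?_, ?_, ?_, ?_, ?_, ?_⟩ <;>
      (try simp only [max_le_iff, le_min_iff, abs_le]) <;> omega
  · refine ⟨h3, h2, h1, h4, h6, h5, h7, ?_, ?_, ?_, ?_, ?_, ?_, ?_, ?_⟩ <;>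
      (try simp only [max_le_iff, le_min_iff, abs_le]) <;> omega
  · unfold F Kprime
    rw [show mMin r₃ r₄ r₁ r₂ i j = mMin r₁ r₂ r₃ r₄ i j from by unfold mMin; omega,
      show mMax r₃ r₄ r₁ r₂ i j = mMax r₁ r₂ r₃ r₄ i j from by unfold mMax; omega,
      show rho r₃ r₄ r₁ r₂ = rho r₁ r₂ r₃ r₄ from by unfold rho; omega,
      theta_comm t N r₃ r₂, theta_comm t N r₄ r₁]
    congr 1
    · ring
    · apply Finset.sum_congr rfl
      intro m _
      rw [show r₄ + r₁ - j = r₁ + r₄ - j by ring, show r₃ + r₂ - j = r₂ + r₃ - j by ring,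
        show i + j - r₄ - r₂ = i + j - r₂ - r₄ by ring,
        show i + j - r₃ - r₁ = i + j - r₁ - r₃ by ring]
      simp only [show ((if (1:ℕ) = 2 then (1:ℤ) else 0) = 0) from rfl,
        show ((if (1:ℕ) = 1 then (1:ℤ) else 0) = 1) from rfl, mul_zero, mul_one, add_zero]
      ring
  · unfold F Kprime
    rw [show mMin r₁ r₄ r₃ r₂ j i = mMin r₁ r₂ r₃ r₄ i j from by unfold mMin; omega,
      show mMax r₁ r₄ r₃ r₂ j i = mMax r₁ r₂ r₃ r₄ i j from by unfold mMax; omega,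
      show rho r₁ r₄ r₃ r₂ = rho r₁ r₂ r₃ r₄ from by unfold rho; omega,
      theta_comm t N r₃ r₂, theta_comm t N r₄ r₃]
    congr 1
    · ring
    · apply Finset.sum_congr rfl
      intro m _
      rw [show r₃ + r₂ - j = r₂ + r₃ - j by ring, show r₄ + r₃ - i = r₃ + r₄ - i by ring,
        show j + i - r₄ - r₂ = i + j - r₂ - r₄ by ring,
        show j + i - r₁ - r₃ = i + j - r₁ - r₃ by ring]
      simp only [show ((if (1:ℕ) = 2 then (1:ℤ) else 0) = 0) from rfl,
        show ((if (1:ℕ) = 1 then (1:ℤ) else 0) = 1) from rfl, mul_zero, mul_one, add_zero]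
      ring
  · unfold F Kprime
    rw [show mMin r₃ r₂ r₁ r₄ j i = mMin r₁ r₂ r₃ r₄ i j from by unfold mMin; omega,
      show mMax r₃ r₂ r₁ r₄ j i = mMax r₁ r₂ r₃ r₄ i j from by unfold mMax; omega,
      show rho r₃ r₂ r₁ r₄ = rho r₁ r₂ r₃ r₄ from by unfold rho; omega,
      theta_comm t N r₃ r₂, theta_comm t N r₂ r₁]
    congr 1
    · ring
    · apply Finset.sum_congr rfl
      intro m _
      rw [show r₂ + r₁ - i = r₁ + r₂ - i by ring, show r₃ + r₂ - j = r₂ + r₃ - j by ring,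
        show j + i - r₂ - r₄ = i + j - r₂ - r₄ by ring,
        show j + i - r₃ - r₁ = i + j - r₁ - r₃ by ring]
      simp only [show ((if (1:ℕ) = 2 then (1:ℤ) else 0) = 0) from rfl,
        show ((if (1:ℕ) = 1 then (1:ℤ) else 0) = 1) from rfl, mul_zero, mul_one, add_zero]
      ring
end

section
/- (ρ-Regge symmetry, type I.) Assume (r1,r2,r3,r4,i,j,N) is admissible and r1 + r3 = r2 + r4, and set ρ = (r1+r2+r3+r4)/2. Then the tuple (ρ−r4, ρ−r3, ρ−r2, ρ−r1, i, j, N) is admissible, satisfies (ρ−r4) + (ρ−r2) = (ρ−r3) + (ρ−r1), and F_1^N(r1, r2, i; r3, r4, j) = F_1^N(ρ−r4, ρ−r3, i; ρ−r2, ρ−r1, j). -/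
open Finset

/-- ρ-Regge symmetry, type I: with `ρ = (r₁+r₂+r₃+r₄)/2`, the tuple
`(ρ−r₄, ρ−r₃, ρ−r₂, ρ−r₁, i, j, N)` is admissible, satisfies the type I fusion relation, and
`F_1^N(r₁,r₂,i;r₃,r₄,j) = F_1^N(ρ−r₄, ρ−r₃, i; ρ−r₂, ρ−r₁, j)`. -/
theorem stmt13 (t : ℝ) (ht : 0 < t) (ht1 : t ≠ 1) (r₁ r₂ r₃ r₄ i j N : ℤ)
    (hadm : Admissible r₁ r₂ r₃ r₄ i j N) (hfus : r₁ + r₃ = r₂ + r₄) :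
    Admissible (rho r₁ r₂ r₃ r₄ - r₄) (rho r₁ r₂ r₃ r₄ - r₃) (rho r₁ r₂ r₃ r₄ - r₂)
      (rho r₁ r₂ r₃ r₄ - r₁) i j N ∧
    (rho r₁ r₂ r₃ r₄ - r₄) + (rho r₁ r₂ r₃ r₄ - r₂) =
      (rho r₁ r₂ r₃ r₄ - r₃) + (rho r₁ r₂ r₃ r₄ - r₁) ∧
    F t 1 N r₁ r₂ i r₃ r₄ j =
      F t 1 N (rho r₁ r₂ r₃ r₄ - r₄) (rho r₁ r₂ r₃ r₄ - r₃) i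
        (rho r₁ r₂ r₃ r₄ - r₂) (rho r₁ r₂ r₃ r₄ - r₁) j := by
  have h4 : rho r₁ r₂ r₃ r₄ - r₄ = r₂ := by unfold rho; omega
  have h3 : rho r₁ r₂ r₃ r₄ - r₃ = r₁ := by unfold rho; omega
  have h2 : rho r₁ r₂ r₃ r₄ - r₂ = r₄ := by unfold rho; omega
  have h1 : rho r₁ r₂ r₃ r₄ - r₁ = r₃ := by unfold rho; omega
  rw [h1, h2, h3, h4]
  refine ⟨?_, by omega, ?_⟩
  · simp only [Admissible, max_le_iff, le_min_iff, abs_le] at hadm ⊢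
    omega
  · have hrho : rho r₂ r₁ r₄ r₃ = rho r₁ r₂ r₃ r₄ := by unfold rho; omega
    have hmin : mMin r₂ r₁ r₄ r₃ i j = mMin r₁ r₂ r₃ r₄ i j := by unfold mMin; omega
    have hmax : mMax r₂ r₁ r₄ r₃ i j = mMax r₁ r₂ r₃ r₄ i j := by unfold mMax; omega
    have htheta : ∀ a b c : ℤ, theta t N a b c = theta t N b a c := by
      intro a b c
      unfold theta
      rw [show b + a - c = a + b - c from by ring, show b - a + c = -a + b + c from by ring,
        show -b + a + c = a - b + c from by ring, show b + a + c = a + b + c from by ring]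
      ring_nf
    have hK : Kprime t N r₂ r₁ r₄ r₃ i j = Kprime t N r₁ r₂ r₃ r₄ i j := by
      unfold Kprime
      rw [htheta r₂ r₁ i, htheta r₄ r₃ i]
      ring
    unfold F
    rw [hrho, hmin, hmax, hK]
    congr 1
    refine Finset.sum_congr rfl fun m hm => ?_
    rw [show r₄ + r₃ - i = r₃ + r₄ - i from by ring,
      show r₂ + r₁ - i = r₁ + r₂ - i from by ring,
      show i + j - r₁ - r₃ = i + j - r₂ - r₄ from by omega]
    ring
end
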